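/- Let t ≥ 5 and μ ≥ 1 be integers, and let G be a finite simple graph with n vertices satisfying all of the following: (i) n ≥ 2t + 1; (ii) the sum of the vertex degrees of G is at most 6n + 6μ − 12; (iii) the minimum degree of G is at least t; (iv) G has a vertex of degree at least 2t; (v) every vertex v of degree at least t + 2 has at most ⌊deg(v)/2⌋ neighbours of degree t; (vi) every vertex of degree exactly t has at least ⌈t/2⌉ neighbours of degree at least t + 2; (vii) if t is even, then every vertex of degree exactly t that has exactly t/2 neighbours of degree at least t + 2 has at least one neighbour of degree at least t + 3. Then (2t + 2)(t − 5) < 6μ − 12. -/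

import Mathlib

set_option maxHeartbeats 2000000 in
/-- The discharging argument: a graph satisfying properties (i)–(vii) forces
`(2t + 2)(t − 5) < 6μ − 12`. -/
theorem discharging_inequality
    {V : Type*} [Fintype V] [DecidableEq V]
    (G : SimpleGraph V) [DecidableRel G.Adj]
    (t μ : ℕ) (ht : 5 ≤ t) (hμ : 1 ≤ μ)
    (hn : 2 * t + 1 ≤ Fintype.card V)
    (hdegsum : ((∑ v, G.degree v : ℕ) : ℤ) ≤
      6 * (Fintype.card V : ℤ) + 6 * (μ : ℤ) - 12)
    (hmin : ∀ v, t ≤ G.degree v)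
    (hbig : ∃ v, 2 * t ≤ G.degree v)
    (hfew_low : ∀ v, t + 2 ≤ G.degree v →
      ((G.neighborFinset v).filter (fun w => G.degree w = t)).card ≤ G.degree v / 2)
    (hmany_high : ∀ v, G.degree v = t →
      (t + 1) / 2 ≤ ((G.neighborFinset v).filter (fun w => t + 2 ≤ G.degree w)).card)
    (heven : Even t → ∀ v, G.degree v = t →
      ((G.neighborFinset v).filter (fun w => t + 2 ≤ G.degree w)).card = t / 2 →
      ∃ w ∈ G.neighborFinset v, t + 3 ≤ G.degree w) :
    (2 * (t : ℤ) + 2) * ((t : ℤ) - 5) < 6 * (μ : ℤ) - 12 := by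
  obtain ⟨w0, hw0⟩ := hbig
  obtain ⟨q, hqdef⟩ : ∃ q : ℚ, q = (t : ℚ) := ⟨_, rfl⟩
  have hq : (5:ℚ) ≤ q := by rw [hqdef]; exact_mod_cast ht
  obtain ⟨f, hfdef⟩ : ∃ f : V → ℚ, f = fun u =>
    if t + 2 ≤ G.degree u then
      (if Even t then (if t + 3 ≤ G.degree u then 4/(q+2) else 2/(q+2)) else 2/(q+1))
    else 0 := ⟨_, rfl⟩
  obtain ⟨T, hTdef⟩ : ∃ T : V → V → ℚ, T = fun u v =>
    if G.Adj u v ∧ t + 2 ≤ G.degree u ∧ G.degree v = t then f u else 0 := ⟨_, rfl⟩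
  -- basic facts about f
  have hf_nonneg : ∀ u, 0 ≤ f u := by
    intro u
    simp only [hfdef]
    split_ifs <;> positivity
  have hf_lb : ∀ u, t + 2 ≤ G.degree u → (if Even t then 2/(q+2) else 2/(q+1)) ≤ f u := by
    intro u hu
    simp only [hfdef, if_pos hu]
    split_ifs with h1 h2
    · have h2 : (0:ℚ) < q + 2 := by linarith
      rw [div_le_div_iff₀ h2 h2]; linarith
    · exact le_refl _
    · exact le_refl _
  have hf_ub : ∀ u, f u ≤ (if Even t then 4/(q+2) else 2/(q+1)) := by
    intro u
    simp only [hfdef]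
    split_ifs with h1 h2 h3
    · exact le_refl _
    · have h : (0:ℚ) < q + 2 := by linarith
      rw [div_le_div_iff₀ h h]; linarith
    · exact le_refl _
    · positivity
    · positivity
  have hT_nonneg : ∀ u v, 0 ≤ T u v := by
    intro u v
    simp only [hTdef]
    split_ifs
    · exact hf_nonneg u
    · exact le_refl _
  -- the amount sent out by a vertex
  have hout : ∀ v, t + 2 ≤ G.degree v →
      (∑ w, T v w) =
        (((G.neighborFinset v).filter (fun w => G.degree w = t)).card : ℚ) * f v := by
    intro v hv
    have : ∀ w, T v w = if w ∈ (G.neighborFinset v).filter (fun w => G.degree w = t)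
        then f v else 0 := by
      intro w
      simp only [hTdef, Finset.mem_filter, SimpleGraph.mem_neighborFinset]
      by_cases h : G.Adj v w ∧ G.degree w = t
      · rw [if_pos ⟨h.1, hv, h.2⟩, if_pos h]
      · rw [if_neg, if_neg h]
        rintro ⟨h1, _, h3⟩; exact h ⟨h1, h3⟩
    rw [Finset.sum_congr rfl (fun w _ => this w)]
    rw [Finset.sum_ite_mem, Finset.univ_inter, Finset.sum_const, nsmul_eq_mul]
  have hout0 : ∀ v, ¬ (t + 2 ≤ G.degree v) → (∑ w, T v w) = 0 := by
    intro v hv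
    apply Finset.sum_eq_zero
    intro w _
    simp only [hTdef]
    rw [if_neg]
    rintro ⟨_, h2, _⟩; exact hv h2
  -- amount received
  have hin_nonneg : ∀ v, 0 ≤ ∑ w, T w v :=
    fun v => Finset.sum_nonneg (fun w _ => hT_nonneg w v)
  have hin : ∀ v, G.degree v = t →
      (∑ w, T w v) = ∑ w ∈ (G.neighborFinset v).filter (fun w => t + 2 ≤ G.degree w), f w := by
    intro v hv
    have hset : (G.neighborFinset v).filter (fun w => t + 2 ≤ G.degree w)
        = Finset.univ.filter (fun w => G.Adj v w ∧ t + 2 ≤ G.degree w) := by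
      ext w
      simp [SimpleGraph.mem_neighborFinset]
    rw [hset, Finset.sum_filter]
    apply Finset.sum_congr rfl
    intro w _
    simp only [hTdef]
    by_cases h : G.Adj v w ∧ t + 2 ≤ G.degree w
    · rw [if_pos ⟨h.1.symm, h.2, hv⟩, if_pos h]
    · rw [if_neg, if_neg h]
      rintro ⟨h1, h2, _⟩
      exact h ⟨h1.symm, h2⟩
  -- parity as mod facts, for omega
  have hq2 : (0:ℚ) < q + 2 := by linarith
  have hq1 : (0:ℚ) < q + 1 := by linarith
  -- key pointwise bound
  have key : ∀ v, q - 5 ≤ (G.degree v : ℚ) - 6 - (∑ w, T v w) + (∑ w, T w v) := by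
    intro v
    have hdv : t ≤ G.degree v := hmin v
    by_cases hvt : G.degree v = t
    · -- degree-t vertex: receives at least 1
      rw [hin v hvt, hout0 v (by omega)]
      obtain ⟨H, hHdef⟩ : ∃ H, H = (G.neighborFinset v).filter (fun w => t + 2 ≤ G.degree w) := ⟨_, rfl⟩
      rw [← hHdef]
      have hH := hmany_high v hvt
      rw [← hHdef] at hH
      have hdq : (G.degree v : ℚ) = q := by rw [hqdef, hvt]
      have hrecv : (1:ℚ) ≤ ∑ w ∈ H, f w := by
        by_cases hev : Even t
        · have hmod : t % 2 = 0 := Nat.even_iff.1 hev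
          have hlb2 : ∀ x ∈ H, 2/(q+2) ≤ f x := by
            intro x hx
            have hx2 : t + 2 ≤ G.degree x := by
              rw [hHdef] at hx
              exact (Finset.mem_filter.1 hx).2
            have := hf_lb x hx2
            rwa [if_pos hev] at this
          by_cases hcard : H.card = t / 2
          · obtain ⟨w, hwmem, hw3⟩ := heven hev v hvt (by rw [← hHdef]; exact hcard)
            have hwH : w ∈ H := by
              rw [hHdef]
              exact Finset.mem_filter.2 ⟨hwmem, by omega⟩
            have hfw : f w = 4/(q+2) := by
              simp only [hfdef]
              rw [if_pos (by omega : t + 2 ≤ G.degree w), if_pos hev, if_pos hw3]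
            rw [← Finset.add_sum_erase _ f hwH, hfw]
            have hrest : (((H.erase w).card : ℚ)) * (2/(q+2)) ≤ ∑ x ∈ H.erase w, f x := by
              have := Finset.card_nsmul_le_sum (H.erase w) f (2/(q+2))
                (fun x hx => hlb2 x (Finset.mem_of_mem_erase hx))
              rwa [nsmul_eq_mul] at this
            have hcarde : 2 * (H.erase w).card + 2 = t := by
              rw [Finset.card_erase_of_mem hwH, hcard]; omega
            have hcast : 2 * (((H.erase w).card : ℚ)) + 2 = q := by
              rw [hqdef]; exact_mod_cast hcarde
            have heq : 4/(q+2) + (((H.erase w).card : ℚ)) * (2/(q+2))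
                = (4 + (((H.erase w).card : ℚ)) * 2) / (q+2) := by
              rw [mul_div_assoc', ← add_div]
            have hge : (1:ℚ) ≤ 4/(q+2) + (((H.erase w).card : ℚ)) * (2/(q+2)) := by
              rw [heq, le_div_iff₀ hq2]
              linarith
            linarith
          · have hcard' : t + 2 ≤ 2 * H.card := by omega
            have hcast : q + 2 ≤ 2 * (H.card : ℚ) := by
              rw [hqdef]; exact_mod_cast hcard'
            have hrest : ((H.card : ℚ)) * (2/(q+2)) ≤ ∑ x ∈ H, f x := by
              have := Finset.card_nsmul_le_sum H f (2/(q+2)) hlb2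
              rwa [nsmul_eq_mul] at this
            have hge : (1:ℚ) ≤ ((H.card : ℚ)) * (2/(q+2)) := by
              rw [mul_div_assoc', le_div_iff₀ hq2]
              linarith
            linarith
        · have hmod : t % 2 = 1 := Nat.odd_iff.1 (Nat.not_even_iff_odd.1 hev)
          have hlb2 : ∀ x ∈ H, 2/(q+1) ≤ f x := by
            intro x hx
            have hx2 : t + 2 ≤ G.degree x := by
              rw [hHdef] at hx
              exact (Finset.mem_filter.1 hx).2
            have := hf_lb x hx2
            rwa [if_neg hev] at this
          have hcard' : t + 1 ≤ 2 * H.card := by omega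
          have hcast : q + 1 ≤ 2 * (H.card : ℚ) := by
            rw [hqdef]; exact_mod_cast hcard'
          have hrest : ((H.card : ℚ)) * (2/(q+1)) ≤ ∑ x ∈ H, f x := by
            have := Finset.card_nsmul_le_sum H f (2/(q+1)) hlb2
            rwa [nsmul_eq_mul] at this
          have hge : (1:ℚ) ≤ ((H.card : ℚ)) * (2/(q+1)) := by
            rw [mul_div_assoc', le_div_iff₀ hq1]
            linarith
          linarith
      rw [hdq]
      linarith
    · -- degree ≥ t+1
      have hS := hin_nonneg v
      by_cases hvh : t + 2 ≤ G.degree v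
      · rw [hout v hvh]
        have hl := hfew_low v hvh
        obtain ⟨l, hldef⟩ : ∃ l, l = ((G.neighborFinset v).filter (fun w => G.degree w = t)).card := ⟨_, rfl⟩
        rw [← hldef] at hl ⊢
        have hdcast : (t:ℚ) + 2 ≤ (G.degree v : ℚ) := by exact_mod_cast hvh
        -- enough: l * f v ≤ (deg v : ℚ) - q - 1
        have hmain : (l : ℚ) * f v ≤ (G.degree v : ℚ) - q - 1 := by
          by_cases hev : Even t
          · have hmod : t % 2 = 0 := Nat.even_iff.1 hev
            by_cases h3 : t + 3 ≤ G.degree v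
            · have hfv : f v = 4/(q+2) := by
                simp only [hfdef]
                rw [if_pos hvh, if_pos hev, if_pos h3]
              rw [hfv]
              by_cases h4 : t + 4 ≤ G.degree v
              · have h2l : 2 * l ≤ G.degree v := by omega
                have h2l' : 2 * (l:ℚ) ≤ (G.degree v : ℚ) := by exact_mod_cast h2l
                have hd4 : (q:ℚ) + 4 ≤ (G.degree v : ℚ) := by
                  rw [hqdef]; exact_mod_cast h4
                rw [mul_div_assoc', div_le_iff₀ hq2]
                nlinarith [hq, hd4, h2l']
              · have hd3 : G.degree v = t + 3 := by omega
                have h2l : 2 * l ≤ t + 2 := by omega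
                have h2l' : 2 * (l:ℚ) ≤ q + 2 := by
                  rw [hqdef]; exact_mod_cast h2l
                have hdq3 : (G.degree v : ℚ) = q + 3 := by
                  rw [hqdef, hd3]; push_cast; ring
                rw [hdq3, mul_div_assoc', div_le_iff₀ hq2]
                nlinarith [hq, h2l']
            · have hd2 : G.degree v = t + 2 := by omega
              have hfv : f v = 2/(q+2) := by
                simp only [hfdef]
                rw [if_pos hvh, if_pos hev, if_neg h3]
              have h2l : 2 * l ≤ t + 2 := by omega
              have h2l' : 2 * (l:ℚ) ≤ q + 2 := by
                rw [hqdef]; exact_mod_cast h2l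
              have hdq2 : (G.degree v : ℚ) = q + 2 := by
                rw [hqdef, hd2]; push_cast; ring
              rw [hfv, hdq2, mul_div_assoc', div_le_iff₀ hq2]
              nlinarith [hq, h2l']
          · have hmod : t % 2 = 1 := Nat.odd_iff.1 (Nat.not_even_iff_odd.1 hev)
            have hfv : f v = 2/(q+1) := by
              simp only [hfdef]
              rw [if_pos hvh, if_neg hev]
            rw [hfv]
            by_cases h3 : t + 3 ≤ G.degree v
            · have h2l : 2 * l ≤ G.degree v := by omega
              have h2l' : 2 * (l:ℚ) ≤ (G.degree v : ℚ) := by exact_mod_cast h2l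
              have hd3 : (q:ℚ) + 3 ≤ (G.degree v : ℚ) := by
                rw [hqdef]; exact_mod_cast h3
              rw [mul_div_assoc', div_le_iff₀ hq1]
              nlinarith [hq, hd3, h2l']
            · have hd2 : G.degree v = t + 2 := by omega
              have h2l : 2 * l ≤ t + 1 := by omega
              have h2l' : 2 * (l:ℚ) ≤ q + 1 := by
                rw [hqdef]; exact_mod_cast h2l
              have hdq2 : (G.degree v : ℚ) = q + 2 := by
                rw [hqdef, hd2]; push_cast; ring
              rw [hdq2, mul_div_assoc', div_le_iff₀ hq1]
              nlinarith [hq, h2l']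
        linarith
      · rw [hout0 v hvh]
        have hd1 : t + 1 ≤ G.degree v := by omega
        have : (q:ℚ) + 1 ≤ (G.degree v : ℚ) := by
          rw [hqdef]; exact_mod_cast hd1
        linarith
  -- strict bound for the big vertex
  have keyw0 : 2*q - 10 < (G.degree w0 : ℚ) - 6 - (∑ w, T w0 w) + (∑ w, T w w0) := by
    have hS := hin_nonneg w0
    have hvh : t + 2 ≤ G.degree w0 := by omega
    rw [hout w0 hvh]
    have hl := hfew_low w0 hvh
    obtain ⟨l, hldef⟩ : ∃ l, l = ((G.neighborFinset w0).filter (fun w => G.degree w = t)).card := ⟨_, rfl⟩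
    rw [← hldef] at hl ⊢
    have h2l : 2 * l ≤ G.degree w0 := by omega
    have h2l' : 2 * (l:ℚ) ≤ (G.degree w0 : ℚ) := by exact_mod_cast h2l
    have hd2t : 2 * q ≤ (G.degree w0 : ℚ) := by
      rw [hqdef]
      exact_mod_cast hw0
    have hub := hf_ub w0
    have hfnn := hf_nonneg w0
    have hlnn : (0:ℚ) ≤ (l:ℚ) := by positivity
    have hmain : (l : ℚ) * f w0 < (G.degree w0 : ℚ) - 2*q + 4 := by
      by_cases hev : Even t
      · rw [if_pos hev] at hub
        have h1 : (l:ℚ) * f w0 ≤ (l:ℚ) * (4/(q+2)) := by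
          apply mul_le_mul_of_nonneg_left hub hlnn
        have h2 : (l:ℚ) * (4/(q+2)) < (G.degree w0 : ℚ) - 2*q + 4 := by
          rw [mul_div_assoc', div_lt_iff₀ hq2]
          nlinarith [hq, hd2t, h2l']
        linarith
      · rw [if_neg hev] at hub
        have h1 : (l:ℚ) * f w0 ≤ (l:ℚ) * (2/(q+1)) := by
          apply mul_le_mul_of_nonneg_left hub hlnn
        have h2 : (l:ℚ) * (2/(q+1)) < (G.degree w0 : ℚ) - 2*q + 4 := by
          rw [mul_div_assoc', div_lt_iff₀ hq1]
          nlinarith [hq, hd2t, h2l']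
        linarith
    linarith
  -- conservation
  have conserve : (∑ v, ((G.degree v:ℚ) - 6 - (∑ w, T v w) + (∑ w, T w v)))
      = ∑ v, ((G.degree v:ℚ) - 6) := by
    have hc : (∑ v, ∑ w, T v w) = ∑ v, ∑ w, T w v := Finset.sum_comm
    simp only [Finset.sum_add_distrib, Finset.sum_sub_distrib]
    rw [hc]
    ring
  -- upper bound on total charge
  have hsum_ub : (∑ v, ((G.degree v:ℚ) - 6)) ≤ 6*(μ:ℚ) - 12 := by
    have hcast : ((∑ v, G.degree v : ℕ):ℚ) ≤ 6*(Fintype.card V:ℚ) + 6*(μ:ℚ) - 12 := by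
      exact_mod_cast hdegsum
    rw [Finset.sum_sub_distrib, Finset.sum_const, Finset.card_univ, nsmul_eq_mul]
    push_cast at hcast ⊢
    linarith
  -- lower bound on total charge
  have hlb : (2*q+2)*(q-5) < ∑ v, ((G.degree v:ℚ) - 6 - (∑ w, T v w) + (∑ w, T w v)) := by
    rw [← Finset.add_sum_erase _ _ (Finset.mem_univ w0)]
    have hrest : (((Finset.univ.erase w0).card : ℚ)) * (q-5)
        ≤ ∑ v ∈ Finset.univ.erase w0, ((G.degree v:ℚ) - 6 - (∑ w, T v w) + (∑ w, T w v)) := by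
      have := Finset.card_nsmul_le_sum (Finset.univ.erase w0)
        (fun v => (G.degree v:ℚ) - 6 - (∑ w, T v w) + (∑ w, T w v)) (q-5)
        (fun x _ => key x)
      rwa [nsmul_eq_mul] at this
    have hcard : (Finset.univ.erase w0).card = Fintype.card V - 1 := by
      rw [Finset.card_erase_of_mem (Finset.mem_univ w0), Finset.card_univ]
    have hcast : (((Finset.univ.erase w0).card : ℚ)) = (Fintype.card V : ℚ) - 1 := by
      rw [hcard, Nat.cast_sub (by omega)]
      norm_num
    have hncast : 2*q + 1 ≤ (Fintype.card V : ℚ) := by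
      rw [hqdef]
      exact_mod_cast hn
    rw [hcast] at hrest
    have hq5 : (0:ℚ) ≤ q - 5 := by linarith
    nlinarith [hrest, keyw0, hq5, hncast]
  have hfinal : (2*q+2)*(q-5) < 6*(μ:ℚ) - 12 := by
    rw [conserve] at hlb
    linarith
  rw [hqdef] at hfinal
  exact_mod_cast hfinal
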